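/- The sets X_max of maximal paths and X_min of minimal paths in the Euler path space are countable. -/
import Mathlib


open MeasureTheory Filter
open scoped ENNReal

/-- The Euler path space: a point is an infinite edge path in the Euler graph,
`x n : Fin (n+2)` being the label of the edge chosen from level `n` to level `n+1`. -/
abbrev EulerPath : Type := ∀ n : ℕ, Fin (n + 2)

/-- Vertex labels: `kv x n` is the `k` with the path `x` passing through vertex `(n,k)`.
A label `(x n : ℕ) ≤ kv x n` is a left turn (edge to `(n+1, kv x n)`), a larger label
is a right turn (edge to `(n+1, kv x n + 1)`). -/
def kv (x : EulerPath) : ℕ → ℕ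
  | 0 => 0
  | n + 1 => if (x n : ℕ) ≤ kv x n then kv x n else kv x n + 1

/-- The symmetric measure: the product over `n` of the uniform probability measures on
`Fin (n+2)`, characterized as the probability measure giving each cylinder of length `n`
the measure `∏_{i<n} 1/(i+2)`. -/
def IsSymmetricMeasure (η : Measure EulerPath) : Prop :=
  IsProbabilityMeasure η ∧
    ∀ (n : ℕ) (c : EulerPath),
      η {x | ∀ i < n, x i = c i} = ∏ i ∈ Finset.range n, ((i : ℝ≥0∞) + 2)⁻¹
/-- The strict partial order on paths: `x` is less than `y` if they eventually agree,
pass through the same vertex just after the last disagreement, and at the last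
disagreement the edge of `x` strictly precedes the edge of `y` in the order on edges
into that common vertex: the right edges (those from the source with the smaller
vertex label) come before the left edges, and edges with the same source are ordered
by their outgoing labels. -/
def pathLT (x y : EulerPath) : Prop :=
  ∃ N, (∀ n, N < n → x n = y n) ∧ kv x (N + 1) = kv y (N + 1) ∧
    (kv x N < kv y N ∨ (kv x N = kv y N ∧ (x N : ℕ) < (y N : ℕ)))

/-- The set of maximal paths. -/
def Xmax : Set EulerPath := {x | ¬ ∃ y, pathLT x y}

/-- The set of minimal paths. -/
def Xmin : Set EulerPath := {x | ¬ ∃ y, pathLT y x}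

lemma kv_succ_def (x : EulerPath) (n : ℕ) :
    kv x (n + 1) = if (x n : ℕ) ≤ kv x n then kv x n else kv x n + 1 := rfl

lemma kv_le (x : EulerPath) : ∀ n, kv x n ≤ n := by
  intro n
  induction n with
  | zero => simp [kv]
  | succ n ih => rw [kv_succ_def]; split <;> omega

lemma kv_succ_cases (x : EulerPath) (n : ℕ) :
    kv x (n + 1) = kv x n ∨ kv x (n + 1) = kv x n + 1 := by
  rw [kv_succ_def]; split <;> simp

lemma kv_congr (x y : EulerPath) : ∀ n, (∀ i, i < n → x i = y i) → kv x n = kv y n := by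
  intro n
  induction n with
  | zero => intro _; rfl
  | succ n ih =>
    intro h
    have h1 : kv x n = kv y n := ih (fun i hi => h i (by omega))
    have h2 : x n = y n := h n (by omega)
    rw [kv_succ_def, kv_succ_def, h1, h2]

/-- Left turn extraction. -/
lemma left_turn (x : EulerPath) (n : ℕ) (h : kv x (n + 1) = kv x n) : (x n : ℕ) ≤ kv x n := by
  rw [kv_succ_def] at h
  by_contra hc
  rw [if_neg hc] at h
  omega

/-- Right turn extraction. -/
lemma right_turn (x : EulerPath) (n : ℕ) (h : kv x (n + 1) = kv x n + 1) :
    kv x n < (x n : ℕ) := by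
  rw [kv_succ_def] at h
  by_contra hc
  rw [if_pos (by omega)] at h
  omega

/-- A path reaching vertex `(n, min n k)` at each level. -/
def basePath (k : ℕ) : EulerPath := fun n => if n < k then ⟨n + 1, by omega⟩ else ⟨0, by omega⟩

lemma kv_basePath (k : ℕ) : ∀ n, kv (basePath k) n = min n k := by
  intro n
  induction n with
  | zero => simp [kv]
  | succ n ih =>
    rw [kv_succ_def, ih]
    by_cases h : n < k
    · simp only [basePath, if_pos h, Fin.val_mk]
      rw [if_neg (by omega)]
      omega
    · simp only [basePath, if_neg h, Fin.val_mk]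
      rw [if_pos (by omega)]
      omega

/-- Competitor path: follows `basePath j` below level `N`, uses edge label `l` at level `N`,
and agrees with `x` above level `N`. -/
def comp (x : EulerPath) (N j l : ℕ) (hl : l ≤ N + 1) : EulerPath := fun n =>
  if h : n < N then basePath j n else if h2 : N < n then x n else ⟨l, by omega⟩

lemma comp_gt (x : EulerPath) (N j l : ℕ) (hl : l ≤ N + 1) :
    ∀ n, N < n → comp x N j l hl n = x n := by
  intro n hn
  simp only [comp, dif_neg (by omega : ¬ n < N), dif_pos hn]

lemma comp_at (x : EulerPath) (N j l : ℕ) (hl : l ≤ N + 1) :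
    (comp x N j l hl N : ℕ) = l := by
  simp only [comp, dif_neg (lt_irrefl N), dif_neg (lt_irrefl N)]

lemma kv_comp (x : EulerPath) (N j l : ℕ) (hl : l ≤ N + 1) :
    kv (comp x N j l hl) N = min N j := by
  rw [kv_congr _ (basePath j) N, kv_basePath]
  intro i hi
  simp only [comp, dif_pos hi]

/-- If `x` is maximal and arrives at a vertex `(N+1, k)` with `k ≤ N`, it must use the
maximal edge into that vertex: the left edge with label `k`. -/
lemma xmax_step (x : EulerPath) (hx : x ∈ Xmax) (N : ℕ) (hk : kv x (N + 1) ≤ N) :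
    kv x N = kv x (N + 1) ∧ (x N : ℕ) = kv x (N + 1) := by
  by_contra hcon
  apply hx
  set k := kv x (N + 1) with hkdef
  have hl : k ≤ N + 1 := by omega
  refine ⟨comp x N k k hl, N, fun n hn => (comp_gt x N k k hl n hn).symm, ?_, ?_⟩
  · have hy : kv (comp x N k k hl) (N + 1) = k := by
      rw [kv_succ_def, comp_at, kv_comp, min_eq_right (by omega : k ≤ N)]
      simp
    rw [hy]
  · have hmin : min N k = k := min_eq_right (by omega)
    rcases kv_succ_cases x N with h | h
    · right
      refine ⟨by rw [kv_comp, hmin]; omega, ?_⟩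
      have hle := left_turn x N h
      rw [comp_at]
      rcases Nat.lt_or_ge (x N : ℕ) k with h2 | h2
      · exact h2
      · exact absurd ⟨h.symm, by omega⟩ hcon
    · left
      rw [kv_comp, hmin]
      omega

/-- If `x` is minimal and arrives at a vertex `(N+1, k)` with `k ≥ 1`, it must use the
minimal edge into that vertex: the right edge with label `k`. -/
lemma xmin_step (x : EulerPath) (hx : x ∈ Xmin) (N : ℕ) (hk : 1 ≤ kv x (N + 1)) :
    kv x N + 1 = kv x (N + 1) ∧ (x N : ℕ) = kv x (N + 1) := by
  by_contra hcon
  apply hx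
  set k := kv x (N + 1) with hkdef
  have hkN : k ≤ N + 1 := kv_le x (N + 1)
  refine ⟨comp x N (k - 1) k hkN, N, fun n hn => comp_gt x N (k - 1) k hkN n hn, ?_, ?_⟩
  · have hmin : min N (k - 1) = k - 1 := min_eq_right (by omega)
    rw [kv_succ_def, comp_at, kv_comp, hmin, if_neg (by omega)]
    omega
  · have hmin : min N (k - 1) = k - 1 := min_eq_right (by omega)
    have hkvN := kv_le x N
    rcases kv_succ_cases x N with h | h
    · left
      rw [kv_comp, hmin]
      omega
    · right
      have hgt := right_turn x N h
      refine ⟨by rw [kv_comp, hmin]; omega, ?_⟩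
      rw [comp_at]
      rcases Nat.lt_or_ge k (x N : ℕ) with h2 | h2
      · exact h2
      · exact absurd ⟨by omega, by omega⟩ hcon

/-- The countable family containing all maximal paths. -/
def gmax : Option ℕ → EulerPath
  | none => fun n => ⟨n + 1, by omega⟩
  | some m => fun n => if h : n < m then ⟨n + 1, by omega⟩ else ⟨m, by omega⟩

/-- The countable family containing all minimal paths. -/
def gmin : Option ℕ → EulerPath
  | none => fun n => ⟨0, by omega⟩
  | some m => fun n => if h : n < m then ⟨0, by omega⟩ else ⟨n + 1 - m, by omega⟩

lemma kv_diag (x : EulerPath) : ∀ n, (∀ i, i < n → (x i : ℕ) = i + 1) → kv x n = n := by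
  intro n
  induction n with
  | zero => intro _; rfl
  | succ n ih =>
    intro h
    have h1 : kv x n = n := ih fun i hi => h i (by omega)
    rw [kv_succ_def, h1, if_neg (by rw [h n (by omega)]; omega)]

lemma kv_zero_run (x : EulerPath) : ∀ n, (∀ i, i < n → (x i : ℕ) = 0) → kv x n = 0 := by
  intro n
  induction n with
  | zero => intro _; rfl
  | succ n ih =>
    intro h
    have h1 : kv x n = 0 := ih fun i hi => h i (by omega)
    rw [kv_succ_def, h1, if_pos (by rw [h n (by omega)])]

lemma force_top (x : EulerPath) (N : ℕ) (h : kv x (N + 1) = N + 1) : (x N : ℕ) = N + 1 := by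
  have hle := kv_le x N
  have hlt := (x N).isLt
  rcases kv_succ_cases x N with h2 | h2
  · omega
  · have := right_turn x N h2
    omega

lemma force_bot (x : EulerPath) (N : ℕ) (h : kv x (N + 1) = 0) : (x N : ℕ) = 0 := by
  rcases kv_succ_cases x N with h2 | h2
  · have := left_turn x N h2
    omega
  · omega

lemma xmax_subset : Xmax ⊆ Set.range gmax := by
  intro x hx
  by_cases hall : ∀ n, (x n : ℕ) = n + 1
  · exact ⟨none, funext fun n => Fin.ext (hall n).symm⟩
  · push_neg at hall
    have hex : ∃ n, (x n : ℕ) ≠ n + 1 := hall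
    set m := Nat.find hex with hmdef
    have hm : (x m : ℕ) ≠ m + 1 := Nat.find_spec hex
    have hlt : ∀ i, i < m → (x i : ℕ) = i + 1 := by
      intro i hi
      have := Nat.find_min hex hi
      omega
    have hkm : kv x m = m := kv_diag x m hlt
    have h1 : kv x (m + 1) = m := by
      rcases kv_succ_cases x m with h | h
      · omega
      · exact absurd (force_top x m (by omega)) hm
    have hstep := xmax_step x hx m (by omega)
    have key : ∀ n, m ≤ n → kv x (n + 1) = m ∧ (x n : ℕ) = m := by
      intro n hn
      induction n, hn using Nat.le_induction with
      | base => exact ⟨h1, by omega⟩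
      | succ n hn ih =>
        have h3 : kv x (n + 1 + 1) ≤ n + 1 := by
          rcases kv_succ_cases x (n + 1) with h | h <;> omega
        have h4 := xmax_step x hx (n + 1) h3
        exact ⟨by omega, by omega⟩
    refine ⟨some m, funext fun n => Fin.ext ?_⟩
    by_cases h : n < m
    · simp only [gmax, dif_pos h]
      exact (hlt n h).symm
    · simp only [gmax, dif_neg h]
      exact ((key n (by omega)).2).symm

lemma xmin_subset : Xmin ⊆ Set.range gmin := by
  intro x hx
  by_cases hall : ∀ n, (x n : ℕ) = 0
  · exact ⟨none, funext fun n => Fin.ext (hall n).symm⟩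
  · push_neg at hall
    have hex : ∃ n, (x n : ℕ) ≠ 0 := hall
    set m := Nat.find hex with hmdef
    have hm : (x m : ℕ) ≠ 0 := Nat.find_spec hex
    have hlt : ∀ i, i < m → (x i : ℕ) = 0 := by
      intro i hi
      have := Nat.find_min hex hi
      omega
    have hkm : kv x m = 0 := kv_zero_run x m hlt
    have h1 : kv x (m + 1) = 1 := by
      rcases kv_succ_cases x m with h | h
      · exact absurd (force_bot x m (by omega)) hm
      · omega
    have hstep := xmin_step x hx m (by omega)
    have key : ∀ n, m ≤ n → kv x (n + 1) = n + 1 - m ∧ (x n : ℕ) = n + 1 - m := by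
      intro n hn
      induction n, hn using Nat.le_induction with
      | base => refine ⟨by omega, by omega⟩
      | succ n hn ih =>
        have h3 : 1 ≤ kv x (n + 1 + 1) := by
          rcases kv_succ_cases x (n + 1) with h | h <;> omega
        have h4 := xmin_step x hx (n + 1) h3
        exact ⟨by omega, by omega⟩
    refine ⟨some m, funext fun n => Fin.ext ?_⟩
    by_cases h : n < m
    · simp only [gmin, dif_pos h]
      exact (hlt n h).symm
    · simp only [gmin, dif_neg h]
      exact ((key n (by omega)).2).symm

/-- The sets of maximal and of minimal paths in the Euler path space are countable. -/
theorem xmax_xmin_countable : Xmax.Countable ∧ Xmin.Countable := by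
  exact ⟨(Set.countable_range gmax).mono xmax_subset,
    (Set.countable_range gmin).mono xmin_subset⟩
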